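/- For every natural number l ≥ 1, ∫_{1}^{∞} Q_l(x) dx = 1/(l(l+1)), where Q_l is the Legendre function of the second kind. -/

import Mathlib

/-- The Legendre polynomials, via Bonnet's recursion. -/
noncomputable def legendreP : ℕ → ℝ → ℝ
  | 0, _ => 1
  | 1, t => t
  | (n + 2), t =>
      ((2 * (n : ℝ) + 3) * t * legendreP (n + 1) t - ((n : ℝ) + 1) * legendreP n t) /
        ((n : ℝ) + 2)

/-- The Legendre function of the second kind, via Neumann's integral. -/
noncomputable def legendreQ (l : ℕ) (z : ℝ) : ℝ :=
  (1 / 2) * ∫ t in (-1 : ℝ)..1, legendreP l t / (z - t)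

open Polynomial MeasureTheory Real Set Filter intervalIntegral

noncomputable def LP : ℕ → ℝ[X]
  | 0 => 1
  | 1 => X
  | (n+2) => C ((2*(n:ℝ)+3)/((n:ℝ)+2)) * (X * LP (n+1)) - C (((n:ℝ)+1)/((n:ℝ)+2)) * LP n

lemma LP_bonnet (n : ℕ) : ((n:ℝ[X])+2) * LP (n+2)
    = (2*(n:ℝ[X])+3) * (X * LP (n+1)) - ((n:ℝ[X])+1) * LP n := by
  have h : ((n:ℝ)+2) ≠ 0 := by positivity
  rw [show LP (n+2) = C ((2*(n:ℝ)+3)/((n:ℝ)+2)) * (X * LP (n+1))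
      - C (((n:ℝ)+1)/((n:ℝ)+2)) * LP n from rfl]
  have e2 : ((n:ℝ[X])+2) = C ((n:ℝ)+2) := by simp [map_ofNat]
  have e3 : (2*(n:ℝ[X])+3) = C (2*(n:ℝ)+3) := by simp [map_ofNat]
  have e1 : ((n:ℝ[X])+1) = C ((n:ℝ)+1) := by simp
  rw [e2, e3, e1, mul_sub]
  simp only [← mul_assoc]
  rw [← C_mul, ← C_mul, mul_div_cancel₀ _ h, mul_div_cancel₀ _ h]

lemma cast_ne (n k : ℕ) (hk : 0 < k) : ((n:ℝ[X]) + ((k:ℕ):ℝ[X])) ≠ 0 := by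
  have h : ((n:ℝ) + k) ≠ 0 := by positivity
  have e : ((n:ℝ[X]) + ((k:ℕ):ℝ[X])) = C ((n:ℝ) + k) := by simp
  rw [e]
  exact C_ne_zero.mpr h

lemma LP_deriv_pair (n : ℕ) :
    derivative (LP (n+1)) = X * derivative (LP n) + ((n:ℝ[X])+1) * LP n ∧
    derivative (LP n) = X * derivative (LP (n+1)) - ((n:ℝ[X])+1) * LP (n+1) := by
  induction n with
  | zero => constructor <;> simp [LP] <;> ring
  | succ n ih =>
    obtain ⟨ha, hb⟩ := ih
    have hB := congrArg derivative (LP_bonnet n)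
    simp only [derivative_mul, derivative_add, derivative_natCast, derivative_ofNat,
      derivative_X, derivative_sub, zero_mul, zero_add, add_zero, one_mul,
      derivative_one, mul_zero] at hB
    -- (c)_{n+1}
    have hc : (1 - X^2) * derivative (LP (n+1))
        = ((n:ℝ[X])+1) * (LP n - X * LP (n+1)) := by
      linear_combination ha + X * hb
    have hne : ((n:ℝ[X])+2) ≠ 0 := by
      have := cast_ne n 2 (by norm_num); simpa using this
    constructor
    · -- (a)_{n+1}
      apply mul_left_cancel₀ hne
      push_cast
      linear_combination hB - ((n:ℝ[X])+1) * hb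
    · -- (b)_{n+2}
      simp only [show n+1+1 = n+2 from rfl]
      apply mul_left_cancel₀ hne
      push_cast
      have hBo := LP_bonnet n
      linear_combination (-X) * hB + ((n:ℝ[X])+2) * hBo - ((n:ℝ[X])+1) * ha + (2*(n:ℝ[X])+3) * hc

lemma LP_deriv_diff (m : ℕ) :
    derivative (LP (m+2)) - derivative (LP m) = (2*(m:ℝ[X])+3) * LP (m+1) := by
  have ha := (LP_deriv_pair (m+1)).1
  have hb := (LP_deriv_pair m).2
  push_cast at ha
  linear_combination ha - hb

lemma LP_key (m : ℕ) :
    ((m:ℝ[X])+1) * (((m:ℝ[X])+2) * (LP (m+2) - LP m))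
      = (2*(m:ℝ[X])+3) * ((X^2-1) * derivative (LP (m+1))) := by
  have ha := (LP_deriv_pair m).1
  have hb := (LP_deriv_pair m).2
  have hc : (1 - X^2) * derivative (LP (m+1))
      = ((m:ℝ[X])+1) * (LP m - X * LP (m+1)) := by
    linear_combination ha + X * hb
  have hBo := LP_bonnet m
  linear_combination ((m:ℝ[X])+1) * hBo + (2*(m:ℝ[X])+3) * hc

lemma LP_eval_one (n : ℕ) : (LP n).eval 1 = 1 := by
  induction n using Nat.strong_induction_on with
  | _ n ih =>
    match n with
    | 0 => simp [LP]
    | 1 => simp [LP]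
    | (m+2) =>
      have h1 := ih (m+1) (by omega)
      have h0 := ih m (by omega)
      have hB := congrArg (eval 1) (LP_bonnet m)
      simp only [eval_mul, eval_add, eval_sub, eval_natCast, eval_ofNat, eval_X, eval_one,
        eval_mul, one_mul] at hB
      rw [h1, h0] at hB
      have hm : ((m:ℝ)+2) ≠ 0 := by positivity
      have h2 : ((m:ℝ)+2) * eval 1 (LP (m+2)) = ((m:ℝ)+2) * 1 := by linarith
      exact mul_left_cancel₀ hm h2

lemma LP_eval_neg_one (n : ℕ) : (LP n).eval (-1) = (-1)^n := by
  induction n using Nat.strong_induction_on with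
  | _ n ih =>
    match n with
    | 0 => simp [LP]
    | 1 => simp [LP]
    | (m+2) =>
      have h1 := ih (m+1) (by omega)
      have h0 := ih m (by omega)
      have hB := congrArg (eval (-1)) (LP_bonnet m)
      simp only [eval_mul, eval_add, eval_sub, eval_natCast, eval_ofNat, eval_X, eval_one,
        one_mul] at hB
      rw [h1, h0] at hB
      have hm : ((m:ℝ)+2) ≠ 0 := by positivity
      have hpow : ((-1:ℝ))^(m+2) = (-1)^m := by ring
      have hpow1 : ((-1:ℝ))^(m+1) = -(-1)^m := by ring
      rw [hpow1] at hB
      rw [hpow]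
      apply mul_left_cancel₀ hm
      rw [hB]; ring

lemma legendreP_eq (n : ℕ) (t : ℝ) : legendreP n t = (LP n).eval t := by
  induction n using Nat.strong_induction_on with
  | _ n ih =>
    match n with
    | 0 => simp [LP, legendreP]
    | 1 => simp [LP, legendreP]
    | (m+2) =>
      have h1 := ih (m+1) (by omega)
      have h0 := ih m (by omega)
      have hB := congrArg (eval t) (LP_bonnet m)
      simp only [eval_mul, eval_add, eval_sub, eval_natCast, eval_ofNat, eval_X,
        eval_one, one_mul] at hB
      have hm : ((m:ℝ)+2) ≠ 0 := by positivity
      show ((2 * (m : ℝ) + 3) * t * legendreP (m + 1) t - ((m : ℝ) + 1) * legendreP m t) /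
        ((m : ℝ) + 2) = _
      rw [h1, h0]
      field_simp
      linear_combination -hB

lemma two_m_three_ne (m : ℕ) : (2*(m:ℝ)+3) ≠ 0 := by positivity

lemma hasDerivAt_F (m : ℕ) (t : ℝ) :
    HasDerivAt (fun t => (eval t (LP (m+2)) - eval t (LP m))/(2*(m:ℝ)+3))
      (eval t (LP (m+1))) t := by
  have h := (((LP (m+2)).hasDerivAt t).sub ((LP m).hasDerivAt t)).div_const (2*(m:ℝ)+3)
  refine h.congr_deriv (Eq.symm ?_)
  have e := congrArg (eval t) (LP_deriv_diff m)
  simp only [eval_mul, eval_add, eval_sub, eval_natCast, eval_ofNat, eval_one, one_mul] at e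
  rw [eq_div_iff (two_m_three_ne m), e]
  ring

lemma F_eval_one (m : ℕ) : (eval 1 (LP (m+2)) - eval 1 (LP m))/(2*(m:ℝ)+3) = 0 := by
  rw [LP_eval_one, LP_eval_one]; simp

lemma F_eval_neg_one (m : ℕ) : (eval (-1) (LP (m+2)) - eval (-1) (LP m))/(2*(m:ℝ)+3) = 0 := by
  rw [LP_eval_neg_one, LP_eval_neg_one]
  rw [show (-1:ℝ)^(m+2) = (-1)^m by ring]
  simp

lemma integral_LP_zero (m : ℕ) : ∫ t in (-1:ℝ)..1, eval t (LP (m+1)) = 0 := by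
  rw [intervalIntegral.integral_eq_sub_of_hasDerivAt
    (fun t _ => hasDerivAt_F m t) ((LP (m+1)).continuous.intervalIntegrable _ _)]
  rw [F_eval_one, F_eval_neg_one, sub_zero]

lemma cwa0 : ContinuousWithinAt (fun u : ℝ => u * Real.log u) (Ici 0) 0 := by
  have h := tendsto_log_mul_rpow_nhdsGT_zero (zero_lt_one)
  simp only [Real.rpow_one] at h
  have h2 : Tendsto (fun u : ℝ => u * Real.log u) (nhdsWithin 0 (Ioi 0)) (nhds 0) := by
    simpa [mul_comm] using h
  unfold ContinuousWithinAt
  have : (Ici (0:ℝ)) = insert 0 (Ioi 0) := by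
    ext x; simp [le_iff_lt_or_eq, or_comm, eq_comm]
  rw [this, nhdsWithin_insert, tendsto_sup]
  simp only [Real.log_zero, mul_zero]
  constructor
  · simpa using tendsto_pure_nhds (fun u : ℝ => u * Real.log u) 0
  · exact h2

lemma contOn_mul_log : ContinuousOn (fun t : ℝ => (1 - t) * Real.log (1 - t)) (Iic 1) := by
  intro t ht
  have ht' : t ≤ 1 := ht
  rcases eq_or_lt_of_le ht' with h | h
  · subst h
    have : ContinuousWithinAt (fun u : ℝ => u * Real.log u) (Ici 0) ((fun t : ℝ => 1 - t) 1) := by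
      simpa using cwa0
    have hc : ContinuousWithinAt (fun t : ℝ => 1 - t) (Iic 1) 1 :=
      (continuous_const.sub continuous_id).continuousWithinAt
    have := this.comp hc (fun x hx => by simp_all [sub_nonneg])
    simpa [Function.comp_def] using this
  · apply ContinuousWithinAt.mul
    · exact (continuous_const.sub continuous_id).continuousWithinAt
    · apply (Real.continuousAt_log (by linarith [h] : (1:ℝ) - t ≠ 0)).comp
        (continuous_const.sub continuous_id).continuousAt |>.continuousWithinAt

lemma intervalIntegrable_log_one_sub :
    IntervalIntegrable (fun t : ℝ => Real.log (1 - t)) volume (-1) 1 := by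
  -- g t = (1-t) log(1-t) + t + (log 2) * t has derivative -log(1-t) + log 2 ≥ 0 on (-1,1)
  have key : IntervalIntegrable (fun t : ℝ => -Real.log (1 - t) + Real.log 2) volume (-1) 1 := by
    apply intervalIntegral.intervalIntegrable_deriv_of_nonneg
      (g := fun t => (1 - t) * Real.log (1 - t) + t + Real.log 2 * t)
    · apply ContinuousOn.add
      · apply ContinuousOn.add
        · exact contOn_mul_log.mono (by rw [uIcc_of_le (by norm_num)]; exact fun x hx => hx.2)
        · exact continuous_id.continuousOn
      · exact (continuous_const.mul continuous_id).continuousOn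
    · intro x hx
      rw [min_eq_left (by norm_num : (-1:ℝ) ≤ 1), max_eq_right (by norm_num : (-1:ℝ) ≤ 1)] at hx
      have hx1 : (0:ℝ) < 1 - x := by linarith [hx.2]
      have hlog : HasDerivAt (fun t : ℝ => Real.log (1 - t)) (-(1-x)⁻¹) x := by
        have := (Real.hasDerivAt_log hx1.ne').comp x
          ((hasDerivAt_const x (1:ℝ)).sub (hasDerivAt_id x))
        simpa [Function.comp_def] using this
      have h1 := ((hasDerivAt_const x (1:ℝ)).sub (hasDerivAt_id x)).mul hlog
      have h2 := (h1.add (hasDerivAt_id x)).add ((hasDerivAt_id x).const_mul (Real.log 2))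
      refine h2.congr_deriv (Eq.symm ?_)
      simp only [Pi.sub_apply, id_eq]
      field_simp
      ring
    · intro x hx
      rw [min_eq_left (by norm_num : (-1:ℝ) ≤ 1), max_eq_right (by norm_num : (-1:ℝ) ≤ 1)] at hx
      have h2 : (1:ℝ) - x ≤ 2 := by linarith [hx.1]
      have h0 : (0:ℝ) < 1 - x := by linarith [hx.2]
      have := Real.log_le_log h0 h2
      linarith
  have := (key.neg.add (_root_.intervalIntegrable_const (c := Real.log 2)))
  simpa using this

lemma c_ne (m : ℕ) : (((m:ℝ)+1)*((m:ℝ)+2)) ≠ 0 := by positivity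

lemma F_id (m : ℕ) (t : ℝ) :
    (eval t (LP (m+2)) - eval t (LP m))/(2*(m:ℝ)+3)
      = (t^2-1) * eval t (derivative (LP (m+1))) / (((m:ℝ)+1)*((m:ℝ)+2)) := by
  have e := congrArg (eval t) (LP_key m)
  simp only [eval_mul, eval_add, eval_sub, eval_natCast, eval_ofNat, eval_one, eval_pow,
    eval_X, one_mul] at e
  rw [div_eq_div_iff (two_m_three_ne m) (c_ne m)]
  linear_combination e

lemma hasDerivAt_log_one_sub (x : ℝ) (hx : x < 1) :
    HasDerivAt (fun t : ℝ => Real.log (1 - t)) (-(1-x)⁻¹) x := by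
  have h1x : (0:ℝ) < 1 - x := by linarith
  have := (Real.hasDerivAt_log h1x.ne').comp x
    ((hasDerivAt_const x (1:ℝ)).sub (hasDerivAt_id x))
  simpa [Function.comp_def] using this

lemma integral_one_add_mul_deriv (m : ℕ) :
    ∫ t in (-1:ℝ)..1, (1+t) * eval t (derivative (LP (m+1))) = 2 := by
  have hH : ∀ t : ℝ, HasDerivAt
      (fun t => (1+t) * eval t (LP (m+1)) - (eval t (LP (m+2)) - eval t (LP m))/(2*(m:ℝ)+3))
      ((1+t) * eval t (derivative (LP (m+1)))) t := by
    intro t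
    have h1 := ((hasDerivAt_const t (1:ℝ)).add (hasDerivAt_id t)).mul ((LP (m+1)).hasDerivAt t)
    have h2 := h1.sub (hasDerivAt_F m t)
    refine h2.congr_deriv (Eq.symm ?_)
    simp
  have hint : IntervalIntegrable (fun t : ℝ => (1+t) * eval t (derivative (LP (m+1))))
      volume (-1) 1 :=
    (((continuous_const.add continuous_id).mul (derivative (LP (m+1))).continuous)).intervalIntegrable _ _
  rw [intervalIntegral.integral_eq_sub_of_hasDerivAt (fun t _ => hH t) hint]
  rw [F_eval_one, F_eval_neg_one, LP_eval_one]
  norm_num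

lemma integral_LP_mul_log (m : ℕ) :
    ∫ t in (-1:ℝ)..1, eval t (LP (m+1)) * Real.log (1 - t)
      = -2/(((m:ℝ)+1)*((m:ℝ)+2)) := by
  set c : ℝ := ((m:ℝ)+1)*((m:ℝ)+2) with hc
  set φ : ℝ → ℝ := fun t => ((eval t (LP (m+2)) - eval t (LP m))/(2*(m:ℝ)+3)) * Real.log (1-t)
    with hφ
  set w : ℝ → ℝ := fun t => eval t (LP (m+1)) * Real.log (1-t)
    + (1+t) * eval t (derivative (LP (m+1))) / c with hw
  have hcont : ContinuousOn φ (Icc (-1) 1) := by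
    have h1 : ContinuousOn (fun t : ℝ => ((1-t) * Real.log (1-t)) *
        (-(1+t) * eval t (derivative (LP (m+1))) / c)) (Icc (-1) 1) := by
      apply ContinuousOn.mul
      · exact contOn_mul_log.mono (fun x hx => hx.2)
      · exact (((continuous_const.add continuous_id).neg.mul
          (derivative (LP (m+1))).continuous).div_const c).continuousOn
    apply h1.congr
    intro t _
    simp only [hφ]
    rw [F_id m t]
    ring
  have hderiv : ∀ x ∈ Ioo (-1:ℝ) 1, HasDerivAt φ (w x) x := by
    intro x hx
    have h := (hasDerivAt_F m x).mul (hasDerivAt_log_one_sub x hx.2)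
    refine h.congr_deriv (Eq.symm ?_)
    simp only [hw]
    rw [F_id m x]
    have h1x : (1:ℝ) - x ≠ 0 := by have := hx.2; intro h'; linarith [h'] 
    have hc0 : c ≠ 0 := c_ne m
    field_simp
    ring
  have hint : IntervalIntegrable w volume (-1) 1 := by
    apply IntervalIntegrable.add
    · exact intervalIntegrable_log_one_sub.continuousOn_mul (LP (m+1)).continuous.continuousOn
    · exact ((((continuous_const.add continuous_id).mul
        (derivative (LP (m+1))).continuous).div_const c)).intervalIntegrable _ _
  have h0 := intervalIntegral.integral_eq_sub_of_hasDerivAt_of_le (by norm_num)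
    hcont hderiv hint
  have hφ1 : φ 1 = 0 := by
    simp only [hφ]
    rw [F_eval_one m]
    simp
  have hφm1 : φ (-1) = 0 := by
    simp only [hφ]
    rw [F_eval_neg_one m]
    simp
  rw [hφ1, hφm1, sub_zero] at h0
  have hsplit : ∫ t in (-1:ℝ)..1, w t
      = (∫ t in (-1:ℝ)..1, eval t (LP (m+1)) * Real.log (1-t))
        + ∫ t in (-1:ℝ)..1, (1+t) * eval t (derivative (LP (m+1))) / c := by
    rw [hw]
    apply intervalIntegral.integral_add
    · exact intervalIntegrable_log_one_sub.continuousOn_mul (LP (m+1)).continuous.continuousOn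
    · exact ((((continuous_const.add continuous_id).mul
        (derivative (LP (m+1))).continuous).div_const c)).intervalIntegrable _ _
  have h2 : ∫ t in (-1:ℝ)..1, (1+t) * eval t (derivative (LP (m+1))) / c = 2 / c := by
    rw [intervalIntegral.integral_div, integral_one_add_mul_deriv m]
  rw [hsplit, h2] at h0
  rw [neg_div]
  linarith [h0]

lemma inner_integrable (t : ℝ) (ht : t < 1) :
    IntegrableOn (fun x : ℝ => t/(x*(x-t))) (Ioi 1) volume ∧
    (∫ x in Ioi (1:ℝ), t/(x*(x-t))) = -Real.log (1-t) := by
  rcases lt_trichotomy t 0 with htn | htz | htp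
  case inr.inl =>
    subst htz
    constructor
    · simp [integrableOn_const]
    · simp
  all_goals {
    have hderiv : ∀ x ∈ Ici (1:ℝ), HasDerivAt (fun x => Real.log (x - t) - Real.log x)
        (t/(x*(x-t))) x := by
      intro x hx
      have hx1 : (1:ℝ) ≤ x := hx
      have hxt : (0:ℝ) < x - t := by linarith
      have hx0 : (0:ℝ) < x := by linarith
      have h1 : HasDerivAt (fun x : ℝ => Real.log (x - t)) ((x-t)⁻¹) x := by
        have := (Real.hasDerivAt_log hxt.ne').comp x
          ((hasDerivAt_id x).sub (hasDerivAt_const x t))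
        simpa [Function.comp_def] using this
      have h2 := h1.sub (Real.hasDerivAt_log hx0.ne')
      refine h2.congr_deriv (Eq.symm ?_)
      rw [inv_sub_inv hxt.ne' hx0.ne', show x - (x - t) = t by ring, mul_comm]
    have htend : Tendsto (fun x => Real.log (x - t) - Real.log x) atTop (nhds 0) := by
      have h1 : Tendsto (fun x : ℝ => 1 - t/x) atTop (nhds 1) := by
        have hdiv : Tendsto (fun x : ℝ => t/x) atTop (nhds 0) :=
          Tendsto.div_atTop tendsto_const_nhds tendsto_id
        have h0 : Tendsto (fun _ : ℝ => (1:ℝ)) atTop (nhds 1) := tendsto_const_nhds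
        simpa using h0.sub hdiv
      have h2 : Tendsto (fun x : ℝ => Real.log (1 - t/x)) atTop (nhds 0) := by
        have := (Real.continuousAt_log (by norm_num : (1:ℝ) ≠ 0)).tendsto.comp h1
        simpa [Function.comp_def] using this
      apply h2.congr'
      filter_upwards [eventually_ge_atTop (1:ℝ)] with x hx
      have hxt : (0:ℝ) < x - t := by linarith
      have hx0 : (0:ℝ) < x := by linarith
      rw [show (1:ℝ) - t/x = (x - t)/x by field_simp, Real.log_div hxt.ne' hx0.ne']
    have hg1 : Real.log (1 - t) - Real.log 1 = Real.log (1-t) := by simp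
    rcases lt_or_ge t 0 with htneg | htpos
    · -- t < 0 : derivative nonpositive; apply to negation
      have hderiv' : ∀ x ∈ Ici (1:ℝ), HasDerivAt (fun x => -(Real.log (x - t) - Real.log x))
          (-(t/(x*(x-t)))) x := fun x hx => (hderiv x hx).neg
      have hpos : ∀ x ∈ Ioi (1:ℝ), 0 ≤ -(t/(x*(x-t))) := by
        intro x hx
        have hx1 : (1:ℝ) < x := hx
        have h1 : (0:ℝ) < x*(x-t) := by nlinarith
        rw [← neg_div]
        exact div_nonneg (by linarith) h1.le
      have htend' : Tendsto (fun x => -(Real.log (x - t) - Real.log x)) atTop (nhds (-0)) :=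
        htend.neg
      constructor
      · have h3 := (integrableOn_Ioi_deriv_of_nonneg' hderiv' hpos htend').neg
        simpa only [Pi.neg_def, neg_neg] using h3
      · have := integral_Ioi_of_hasDerivAt_of_nonneg' hderiv' hpos htend'
        rw [MeasureTheory.integral_neg] at this
        simp only [neg_zero] at this
        rw [show (∫ x in Ioi (1:ℝ), t/(x*(x-t))) = -(-(∫ x in Ioi (1:ℝ), t/(x*(x-t)))) by ring]
        rw [this]
        simp
    · -- 0 ≤ t (here 0 < t)
      have hpos : ∀ x ∈ Ioi (1:ℝ), 0 ≤ t/(x*(x-t)) := by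
        intro x hx
        have hx1 : (1:ℝ) < x := hx
        have h1 : (0:ℝ) < x*(x-t) := by nlinarith
        positivity
      constructor
      · exact integrableOn_Ioi_deriv_of_nonneg' hderiv hpos htend
      · have := integral_Ioi_of_hasDerivAt_of_nonneg' hderiv hpos htend
        rw [this]
        simp
  }

section Fubini

variable (m : ℕ)

noncomputable def ff (m : ℕ) (x t : ℝ) : ℝ := eval t (LP (m+1)) * (t/(x*(x-t)))

lemma ff_meas : AEStronglyMeasurable (Function.uncurry (ff m))
    ((volume.restrict (Ioi (1:ℝ))).prod (volume.restrict (Ioc (-1:ℝ) 1))) := by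
  have h : Measurable fun p : ℝ×ℝ => eval p.2 (LP (m+1)) * (p.2/(p.1*(p.1-p.2))) :=
    (((LP (m+1)).continuous.measurable).comp measurable_snd).mul
      (measurable_snd.div ((measurable_fst.mul (measurable_fst.sub measurable_snd))))
  exact h.aestronglyMeasurable

lemma ae_fact : ∀ᵐ t ∂(volume.restrict (Ioc (-1:ℝ) 1)), t ∈ Ioc (-1:ℝ) 1 ∧ t ≠ 1 := by
  have h1 : ∀ᵐ t ∂(volume.restrict (Ioc (-1:ℝ) 1)), t ∈ Ioc (-1:ℝ) 1 :=
    ae_restrict_mem measurableSet_Ioc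
  have h2 : ∀ᵐ t : ℝ ∂volume, t ≠ (1:ℝ) := by
    have hv : (volume : Measure ℝ) {(1:ℝ)} = 0 := measure_singleton 1
    rw [ae_iff]
    simpa using hv
  exact h1.and (ae_restrict_of_ae h2)

lemma norm_int_eq (t : ℝ) (ht1 : -1 < t) (ht2 : t < 1) :
    (∫ x in Ioi (1:ℝ), ‖ff m x t‖) = |eval t (LP (m+1))| * |Real.log (1-t)| := by
  have habs : (∫ x in Ioi (1:ℝ), ‖ff m x t‖)
      = |eval t (LP (m+1))| * ∫ x in Ioi (1:ℝ), |t/(x*(x-t))| := by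
    rw [← MeasureTheory.integral_const_mul]
    apply setIntegral_congr_fun measurableSet_Ioi
    intro x _
    simp only [ff, Real.norm_eq_abs, abs_mul]
  rw [habs]
  rcases lt_trichotomy t 0 with htn | htz | htp
  · have : (∫ x in Ioi (1:ℝ), |t/(x*(x-t))|) = -(∫ x in Ioi (1:ℝ), t/(x*(x-t))) := by
      rw [← MeasureTheory.integral_neg]
      apply setIntegral_congr_fun measurableSet_Ioi
      intro x hx
      have hx1 : (1:ℝ) < x := hx
      have hd : (0:ℝ) < x*(x-t) := by nlinarith
      apply abs_of_nonpos
      rw [← neg_nonneg, ← neg_div]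
      exact div_nonneg (by linarith) hd.le
    rw [this, (inner_integrable t ht2).2]
    rw [abs_of_nonneg (Real.log_nonneg (by linarith))]
    ring
  · subst htz; simp
  · have : (∫ x in Ioi (1:ℝ), |t/(x*(x-t))|) = (∫ x in Ioi (1:ℝ), t/(x*(x-t))) := by
      apply setIntegral_congr_fun measurableSet_Ioi
      intro x hx
      have hx1 : (1:ℝ) < x := hx
      have hd : (0:ℝ) < x*(x-t) := by nlinarith
      exact abs_of_nonneg (div_nonneg htp.le hd.le)
    rw [this, (inner_integrable t ht2).2]
    rw [abs_of_nonpos (Real.log_nonpos (by linarith) (by linarith))]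

lemma ff_prod_integrable : Integrable (Function.uncurry (ff m))
    ((volume.restrict (Ioi (1:ℝ))).prod (volume.restrict (Ioc (-1:ℝ) 1))) := by
  rw [MeasureTheory.integrable_prod_iff' (ff_meas m)]
  constructor
  · filter_upwards [ae_fact] with t ht
    obtain ⟨htmem, htne⟩ := ht
    have ht2 : t < 1 := lt_of_le_of_ne htmem.2 htne
    show Integrable (fun x => eval t (LP (m+1)) * (t/(x*(x-t)))) _
    exact ((inner_integrable t ht2).1).const_mul _
  · have h1 : IntervalIntegrable (fun t : ℝ => |eval t (LP (m+1))| * |Real.log (1-t)|)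
          volume (-1) 1 :=
      intervalIntegrable_log_one_sub.abs.continuousOn_mul
        ((LP (m+1)).continuous.abs.continuousOn)
    have h2 := (intervalIntegrable_iff_integrableOn_Ioc_of_le (by norm_num : (-1:ℝ) ≤ 1)).mp h1
    apply h2.congr
    filter_upwards [ae_fact] with t ht
    obtain ⟨htmem, htne⟩ := ht
    exact (norm_int_eq m t htmem.1 (lt_of_le_of_ne htmem.2 htne)).symm

lemma inner_t_eq (x : ℝ) (hx : 1 < x) :
    (∫ t in Ioc (-1:ℝ) 1, ff m x t) = 2 * legendreQ (m+1) x := by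
  have hx0 : (0:ℝ) < x := by linarith
  have hcont1 : ContinuousOn (fun t : ℝ => eval t (LP (m+1)) / (x - t)) (Icc (-1) 1) := by
    apply ContinuousOn.div
    · exact (LP (m+1)).continuous.continuousOn
    · exact (continuous_const.sub continuous_id).continuousOn
    · intro t ht
      have h2 := ht.2
      intro h
      linarith
  have hint1 : IntegrableOn (fun t : ℝ => eval t (LP (m+1)) / (x - t)) (Ioc (-1) 1) volume :=
    (hcont1.integrableOn_Icc).mono_set Ioc_subset_Icc_self
  have hint2 : IntegrableOn (fun t : ℝ => eval t (LP (m+1)) / x) (Ioc (-1) 1) volume :=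
    (((LP (m+1)).continuous.div_const x).continuousOn.integrableOn_Icc).mono_set
      Ioc_subset_Icc_self
  have hcongr : ∀ t ∈ Ioc (-1:ℝ) 1,
      ff m x t = eval t (LP (m+1)) / (x - t) - eval t (LP (m+1)) / x := by
    intro t ht
    have hxt : x - t ≠ 0 := by have := ht.2; intro h; linarith
    simp only [ff]
    field_simp
    ring
  rw [setIntegral_congr_fun measurableSet_Ioc hcongr, MeasureTheory.integral_sub hint1 hint2]
  have hz : (∫ t in Ioc (-1:ℝ) 1, eval t (LP (m+1)) / x) = 0 := by
    have : (∫ t in Ioc (-1:ℝ) 1, eval t (LP (m+1)) / x)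
        = (∫ t in Ioc (-1:ℝ) 1, eval t (LP (m+1))) / x := by
      rw [MeasureTheory.integral_div]
    rw [this, ← intervalIntegral.integral_of_le (by norm_num : (-1:ℝ) ≤ 1),
      integral_LP_zero m]
    simp
  rw [hz, sub_zero]
  rw [legendreQ]
  have : (∫ t in (-1:ℝ)..1, legendreP (m+1) t / (x - t))
      = ∫ t in Ioc (-1:ℝ) 1, eval t (LP (m+1)) / (x - t) := by
    rw [intervalIntegral.integral_of_le (by norm_num : (-1:ℝ) ≤ 1)]
    apply setIntegral_congr_fun measurableSet_Ioc
    intro t _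
    simp only [legendreP_eq]
  rw [this]
  ring

end Fubini

theorem integral_legendreQ (l : ℕ) (hl : 1 ≤ l) :
    ∫ x in Set.Ioi (1 : ℝ), legendreQ l x = 1 / ((l : ℝ) * ((l : ℝ) + 1)) := by
  obtain ⟨m, rfl⟩ : ∃ m, l = m + 1 := ⟨l - 1, (Nat.succ_pred_eq_of_pos hl).symm⟩
  have heq1 : ∀ x ∈ Ioi (1:ℝ), legendreQ (m+1) x
      = (1/2) * ∫ t in Ioc (-1:ℝ) 1, ff m x t := by
    intro x hx
    rw [inner_t_eq m x hx]
    ring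
  rw [setIntegral_congr_fun measurableSet_Ioi heq1, MeasureTheory.integral_const_mul]
  have hswap := MeasureTheory.integral_integral_swap (ff_prod_integrable m)
  rw [hswap]
  have heq2 : (∫ t in Ioc (-1:ℝ) 1, ∫ x in Ioi (1:ℝ), ff m x t)
      = ∫ t in Ioc (-1:ℝ) 1, eval t (LP (m+1)) * (-Real.log (1-t)) := by
    apply setIntegral_congr_ae measurableSet_Ioc
    -- use ae_fact style
    have h2 : ∀ᵐ t : ℝ ∂volume, t ≠ (1:ℝ) := by
      have hv : (volume : Measure ℝ) {(1:ℝ)} = 0 := measure_singleton 1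
      rw [ae_iff]
      simpa using hv
    filter_upwards [h2] with t htne htmem
    have ht2 : t < 1 := lt_of_le_of_ne htmem.2 htne
    rw [show (fun x => ff m x t) = fun x => eval t (LP (m+1)) * (t/(x*(x-t))) from rfl]
    rw [MeasureTheory.integral_const_mul, (inner_integrable t ht2).2]
  rw [heq2]
  have heq3 : (∫ t in Ioc (-1:ℝ) 1, eval t (LP (m+1)) * (-Real.log (1-t)))
      = 2/(((m:ℝ)+1)*((m:ℝ)+2)) := by
    rw [← intervalIntegral.integral_of_le (by norm_num : (-1:ℝ) ≤ 1)]
    have : (∫ t in (-1:ℝ)..1, eval t (LP (m+1)) * (-Real.log (1-t)))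
        = -∫ t in (-1:ℝ)..1, eval t (LP (m+1)) * Real.log (1-t) := by
      rw [← intervalIntegral.integral_neg]
      congr 1
      funext t
      ring
    rw [this, integral_LP_mul_log m]
    rw [neg_div]
    ring
  rw [heq3]
  push_cast
  rw [show ((m:ℝ)+1+1) = (m:ℝ)+2 by ring]
  field_simp
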